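/- Let q be a prime, let λ : ℕ≥1 → ℂ satisfy the Hecke relation λ(m)λ(n) = ∑_{d | gcd(m,n), gcd(d,q)=1} λ(mn/d²) for all positive integers m, n, and let F : ℕ≥1 → ℂ satisfy F(m) = 0 for all m ≥ q. Then for every positive integer n, ∑_{(a,b,c): abc² = n} λ(a) λ(b) μ(b) μ(bc)² F(bc) = λ(n) · ∑_{d | n} μ(d) F(d), where the sum on the left runs over ordered triples (a,b,c) of positive integers with abc² = n and μ is the Möbius function. -/

import Mathlib

open ArithmeticFunction

private lemma sum_moebius_div (u : ℕ) :
    (∑ t ∈ u.divisors, moebius t) = if u = 1 then 1 else 0 := by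
  have h : (moebius * (ArithmeticFunction.zeta : ArithmeticFunction ℕ) : ArithmeticFunction ℤ) u = (1 : ArithmeticFunction ℤ) u := by
    rw [moebius_mul_coe_zeta]
  rwa [coe_mul_zeta_apply, one_apply] at h

private lemma lemA (q : ℕ) (lam : ℕ → ℂ)
    (hHecke : ∀ m n : ℕ, 0 < m → 0 < n →
      lam m * lam n =
        ∑ d ∈ (Nat.gcd m n).divisors.filter (fun d => Nat.Coprime d q),
          lam (m * n / d ^ 2))
    (d N : ℕ) (hd : 0 < d) (hN : 0 < N) (hdq : Nat.Coprime d q) :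
    ∑ t ∈ (Nat.gcd d N).divisors, (moebius t : ℂ) * (lam (d / t) * lam (N / t))
      = lam (d * N) := by
  have hg0 : Nat.gcd d N ≠ 0 := Nat.gcd_ne_zero_left hd.ne'
  have hstep : ∀ t ∈ (Nat.gcd d N).divisors,
      (moebius t : ℂ) * (lam (d / t) * lam (N / t))
        = ∑ s ∈ (Nat.gcd (d / t) (N / t)).divisors,
            (moebius t : ℂ) * lam (d * N / (t * s) ^ 2) := by
    intro t ht
    obtain ⟨htg, -⟩ := Nat.mem_divisors.mp ht
    have htd : t ∣ d := htg.trans (Nat.gcd_dvd_left _ _)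
    have htN : t ∣ N := htg.trans (Nat.gcd_dvd_right _ _)
    have ht0 : 0 < t := Nat.pos_of_mem_divisors ht
    have h1 : lam (d / t) * lam (N / t)
        = ∑ s ∈ (Nat.gcd (d / t) (N / t)).divisors, lam (d * N / (t * s) ^ 2) := by
      rw [hHecke (d / t) (N / t) (Nat.div_pos (Nat.le_of_dvd hd htd) ht0)
        (Nat.div_pos (Nat.le_of_dvd hN htN) ht0)]
      rw [Finset.filter_eq_self.mpr]
      · refine Finset.sum_congr rfl fun s hs => ?_
        congr 1
        rw [Nat.div_mul_div_comm htd htN, Nat.div_div_eq_div_mul]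
        congr 1
        ring
      · intro s hs
        exact Nat.Coprime.coprime_dvd_left
          (((Nat.mem_divisors.mp hs).1.trans (Nat.gcd_dvd_left _ _)).trans
            (Nat.div_dvd_of_dvd htd)) hdq
    rw [h1, Finset.mul_sum]
  calc ∑ t ∈ (Nat.gcd d N).divisors, (moebius t : ℂ) * (lam (d / t) * lam (N / t))
      = ∑ t ∈ (Nat.gcd d N).divisors, ∑ s ∈ (Nat.gcd (d / t) (N / t)).divisors,
          (moebius t : ℂ) * lam (d * N / (t * s) ^ 2) := Finset.sum_congr rfl hstep
    _ = ∑ x ∈ (Nat.gcd d N).divisors.sigma (fun t => (Nat.gcd (d / t) (N / t)).divisors),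
          (moebius x.1 : ℂ) * lam (d * N / (x.1 * x.2) ^ 2) :=
        Finset.sum_sigma' _ _ _
    _ = ∑ x ∈ (Nat.gcd d N).divisors.sigma (fun u => u.divisors),
          (moebius x.2 : ℂ) * lam (d * N / x.1 ^ 2) := by
        refine Finset.sum_nbij' (fun x => ⟨x.1 * x.2, x.1⟩) (fun x => ⟨x.2, x.1 / x.2⟩)
          ?_ ?_ ?_ ?_ ?_
        · rintro ⟨t, s⟩ hx
          rw [Finset.mem_sigma] at hx ⊢
          obtain ⟨ht, hs⟩ := hx
          have htg := (Nat.mem_divisors.mp ht).1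
          have htd : t ∣ d := htg.trans (Nat.gcd_dvd_left _ _)
          have htN : t ∣ N := htg.trans (Nat.gcd_dvd_right _ _)
          have ht0 : 0 < t := Nat.pos_of_mem_divisors ht
          have hs0 : 0 < s := Nat.pos_of_mem_divisors hs
          have hsg := (Nat.mem_divisors.mp hs).1
          have hsd : s ∣ d / t := hsg.trans (Nat.gcd_dvd_left _ _)
          have hsN : s ∣ N / t := hsg.trans (Nat.gcd_dvd_right _ _)
          constructor
          · exact Nat.mem_divisors.mpr ⟨Nat.dvd_gcd ((Nat.dvd_div_iff_mul_dvd htd).mp hsd)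
              ((Nat.dvd_div_iff_mul_dvd htN).mp hsN), hg0⟩
          · exact Nat.mem_divisors.mpr ⟨dvd_mul_right _ _, by positivity⟩
        · rintro ⟨u, t⟩ hx
          rw [Finset.mem_sigma] at hx ⊢
          obtain ⟨hu, ht⟩ := hx
          have hug := (Nat.mem_divisors.mp hu).1
          have htu : t ∣ u := (Nat.mem_divisors.mp ht).1
          have htg : t ∣ Nat.gcd d N := htu.trans hug
          have htd : t ∣ d := htg.trans (Nat.gcd_dvd_left _ _)
          have htN : t ∣ N := htg.trans (Nat.gcd_dvd_right _ _)
          have ht0 : 0 < t := Nat.pos_of_mem_divisors ht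
          constructor
          · exact Nat.mem_divisors.mpr ⟨htg, hg0⟩
          · refine Nat.mem_divisors.mpr ⟨Nat.dvd_gcd ?_ ?_, ?_⟩
            · exact (Nat.dvd_div_iff_mul_dvd htd).mpr
                (by rw [Nat.mul_div_cancel' htu]; exact hug.trans (Nat.gcd_dvd_left _ _))
            · exact (Nat.dvd_div_iff_mul_dvd htN).mpr
                (by rw [Nat.mul_div_cancel' htu]; exact hug.trans (Nat.gcd_dvd_right _ _))
            · have : 0 < d / t := Nat.div_pos (Nat.le_of_dvd hd htd) ht0
              exact (Nat.gcd_ne_zero_left this.ne')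
        · rintro ⟨t, s⟩ hx
          rw [Finset.mem_sigma] at hx
          have ht0 : 0 < t := Nat.pos_of_mem_divisors hx.1
          simp [Nat.mul_div_cancel_left _ ht0]
        · rintro ⟨u, t⟩ hx
          rw [Finset.mem_sigma] at hx
          have htu : t ∣ u := (Nat.mem_divisors.mp hx.2).1
          simp [Nat.mul_div_cancel' htu]
        · rintro ⟨t, s⟩ hx
          rfl
    _ = ∑ u ∈ (Nat.gcd d N).divisors, ∑ t ∈ u.divisors,
          (moebius t : ℂ) * lam (d * N / u ^ 2) := Finset.sum_sigma _ _ _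
    _ = ∑ u ∈ (Nat.gcd d N).divisors,
          (if u = 1 then (1 : ℂ) else 0) * lam (d * N / u ^ 2) := by
        refine Finset.sum_congr rfl fun u hu => ?_
        rw [← Finset.sum_mul, ← Int.cast_sum, sum_moebius_div u]
        split <;> simp
    _ = lam (d * N) := by
        rw [Finset.sum_eq_single 1 (fun u _ hne => by simp [hne])
          (fun h => absurd (Nat.one_mem_divisors.mpr hg0) h)]
        simp

private lemma lemB (q : ℕ) (lam : ℕ → ℂ)
    (hHecke : ∀ m n : ℕ, 0 < m → 0 < n →
      lam m * lam n =
        ∑ d ∈ (Nat.gcd m n).divisors.filter (fun d => Nat.Coprime d q),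
          lam (m * n / d ^ 2))
    (d n : ℕ) (hn : 0 < n) (hdn : d ∣ n) (hsq : Squarefree d) (hdq : Nat.Coprime d q) :
    ∑ c ∈ (Nat.gcd d (n / d)).divisors,
        lam (n / (d * c)) * lam (d / c) * (moebius (d / c) : ℂ)
      = (moebius d : ℂ) * lam n := by
  have hd0 : 0 < d := Nat.pos_of_ne_zero hsq.ne_zero
  have hnd0 : 0 < n / d := Nat.div_pos (Nat.le_of_dvd hn hdn) hd0
  have key : ∀ c ∈ (Nat.gcd d (n / d)).divisors,
      lam (n / (d * c)) * lam (d / c) * (moebius (d / c) : ℂ)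
        = (moebius d : ℂ) *
            ((moebius c : ℂ) * (lam (d / c) * lam ((n / d) / c))) := by
    intro c hc
    obtain ⟨hcg, -⟩ := Nat.mem_divisors.mp hc
    have hcd : c ∣ d := hcg.trans (Nat.gcd_dvd_left _ _)
    have hmul : c * (d / c) = d := Nat.mul_div_cancel' hcd
    have h3 : Squarefree (c * (d / c)) := by rw [hmul]; exact hsq
    obtain ⟨hcop, hsc, -⟩ := Nat.squarefree_mul_iff.mp h3
    have h1 : moebius (c * (d / c)) = moebius c * moebius (d / c) :=
      isMultiplicative_moebius.map_mul_of_coprime hcop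
    rw [hmul] at h1
    have h2 : moebius c * moebius c = 1 := by
      rw [moebius_apply_of_squarefree hsc, ← mul_pow]; norm_num
    have hmu : moebius (d / c) = moebius d * moebius c := by
      rw [h1]; linear_combination (-(moebius (d / c) : ℤ)) * h2
    have hmuC : ((moebius (d / c) : ℤ) : ℂ) = (moebius d : ℂ) * (moebius c : ℂ) := by
      exact_mod_cast hmu
    have hdiv : n / (d * c) = n / d / c := (Nat.div_div_eq_div_mul n d c).symm
    rw [hdiv, hmuC]
    ring
  rw [Finset.sum_congr rfl key, ← Finset.mul_sum]
  congr 1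
  rw [lemA q lam hHecke d (n / d) hd0 hnd0 hdq, Nat.mul_div_cancel' hdn]

theorem mollified_coefficients_via_hecke (q : ℕ) (hq : q.Prime) (lam F : ℕ → ℂ)
    (hHecke : ∀ m n : ℕ, 0 < m → 0 < n →
      lam m * lam n =
        ∑ d ∈ (Nat.gcd m n).divisors.filter (fun d => Nat.Coprime d q),
          lam (m * n / d ^ 2))
    (hF : ∀ m : ℕ, q ≤ m → F m = 0) (n : ℕ) (hn : 0 < n) :
    (∑ tr ∈ (n.divisors ×ˢ n.divisors ×ˢ n.divisors).filter
        (fun tr => tr.1 * tr.2.1 * tr.2.2 ^ 2 = n),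
      lam tr.1 * lam tr.2.1 * (moebius tr.2.1 : ℂ) *
        ((moebius (tr.2.1 * tr.2.2) : ℂ)) ^ 2 * F (tr.2.1 * tr.2.2)) =
      lam n * ∑ d ∈ n.divisors, (moebius d : ℂ) * F d := by
  have hn0 : n ≠ 0 := hn.ne'
  have step1 : (∑ tr ∈ (n.divisors ×ˢ n.divisors ×ˢ n.divisors).filter
        (fun tr => tr.1 * tr.2.1 * tr.2.2 ^ 2 = n),
      lam tr.1 * lam tr.2.1 * (moebius tr.2.1 : ℂ) *
        ((moebius (tr.2.1 * tr.2.2) : ℂ)) ^ 2 * F (tr.2.1 * tr.2.2))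
      = ∑ x ∈ n.divisors.sigma (fun d => (Nat.gcd d (n / d)).divisors),
          lam (n / (x.1 * x.2)) * lam (x.1 / x.2) * (moebius (x.1 / x.2) : ℂ) *
            (moebius x.1 : ℂ) ^ 2 * F x.1 := by
    refine Finset.sum_nbij' (fun tr => ⟨tr.2.1 * tr.2.2, tr.2.2⟩)
      (fun x => (n / (x.1 * x.2), x.1 / x.2, x.2)) ?_ ?_ ?_ ?_ ?_
    · rintro ⟨a, b, c⟩ htr
      simp only [Finset.mem_filter, Finset.mem_product] at htr
      obtain ⟨⟨ha, hb, hc⟩, heq⟩ := htr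
      have hb0 : 0 < b := Nat.pos_of_mem_divisors hb
      have hc0 : 0 < c := Nat.pos_of_mem_divisors hc
      have hbc0 : 0 < b * c := by positivity
      have hfac : (b * c) * (a * c) = n := by rw [← heq]; ring
      have hdivn : n / (b * c) = a * c :=
        Nat.div_eq_of_eq_mul_left hbc0 (by rw [← hfac]; ring)
      rw [Finset.mem_sigma]
      constructor
      · exact Nat.mem_divisors.mpr ⟨⟨a * c, hfac.symm⟩, hn0⟩
      · refine Nat.mem_divisors.mpr ⟨Nat.dvd_gcd (dvd_mul_left _ _) ?_, ?_⟩
        · rw [hdivn]; exact dvd_mul_left _ _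
        · exact Nat.gcd_ne_zero_left hbc0.ne'
    · rintro ⟨d, c⟩ hx
      rw [Finset.mem_sigma] at hx
      obtain ⟨hd, hc⟩ := hx
      have hdn : d ∣ n := (Nat.mem_divisors.mp hd).1
      have hcg := (Nat.mem_divisors.mp hc).1
      have hcd : c ∣ d := hcg.trans (Nat.gcd_dvd_left _ _)
      have hcnd : c ∣ n / d := hcg.trans (Nat.gcd_dvd_right _ _)
      have hdcn : d * c ∣ n := (Nat.dvd_div_iff_mul_dvd hdn).mp hcnd
      have hd0 : 0 < d := Nat.pos_of_mem_divisors hd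
      have hc0 : 0 < c := Nat.pos_of_mem_divisors hc
      have h1 : d / c * c = d := Nat.div_mul_cancel hcd
      have h2 : n / (d * c) * (d * c) = n := Nat.div_mul_cancel hdcn
      simp only [Finset.mem_filter, Finset.mem_product]
      have hdcd : d / c ∣ d := Dvd.intro c h1
      refine ⟨⟨?_, ?_, ?_⟩, ?_⟩
      · exact Nat.mem_divisors.mpr ⟨Nat.div_dvd_of_dvd hdcn, hn0⟩
      · exact Nat.mem_divisors.mpr ⟨hdcd.trans hdn, hn0⟩
      · exact Nat.mem_divisors.mpr ⟨hcd.trans hdn, hn0⟩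
      · calc n / (d * c) * (d / c) * c ^ 2
            = n / (d * c) * (d / c * c) * c := by ring
          _ = n / (d * c) * (d * c) := by rw [h1]; ring
          _ = n := h2
    · rintro ⟨a, b, c⟩ htr
      simp only [Finset.mem_filter, Finset.mem_product] at htr
      obtain ⟨⟨ha, hb, hc⟩, heq⟩ := htr
      have hc0 : 0 < c := Nat.pos_of_mem_divisors hc
      have hbcc : 0 < b * c * c := by
        have hb0 : 0 < b := Nat.pos_of_mem_divisors hb
        positivity
      have h1 : n / (b * c * c) = a :=
        Nat.div_eq_of_eq_mul_left hbcc (by rw [← heq]; ring)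
      have h2 : b * c / c = b := Nat.mul_div_cancel b hc0
      simp [Prod.mk.injEq, h1, h2]
    · rintro ⟨d, c⟩ hx
      rw [Finset.mem_sigma] at hx
      have hcd : c ∣ d := (Nat.mem_divisors.mp hx.2).1.trans (Nat.gcd_dvd_left _ _)
      simp [Nat.div_mul_cancel hcd]
    · rintro ⟨a, b, c⟩ htr
      simp only [Finset.mem_filter, Finset.mem_product] at htr
      obtain ⟨⟨ha, hb, hc⟩, heq⟩ := htr
      have hc0 : 0 < c := Nat.pos_of_mem_divisors hc
      have hbcc : 0 < b * c * c := by
        have hb0 : 0 < b := Nat.pos_of_mem_divisors hb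
        positivity
      have h1 : n / (b * c * c) = a :=
        Nat.div_eq_of_eq_mul_left hbcc (by rw [← heq]; ring)
      have h2 : b * c / c = b := Nat.mul_div_cancel b hc0
      simp only []
      rw [h1, h2]
  rw [step1, Finset.sum_sigma, Finset.mul_sum]
  refine Finset.sum_congr rfl fun d hd => ?_
  have hd0 : 0 < d := Nat.pos_of_mem_divisors hd
  have hdn : d ∣ n := (Nat.mem_divisors.mp hd).1
  by_cases hsq : Squarefree d
  · by_cases hqd : q ∣ d
    · have hF0 : F d = 0 := hF d (Nat.le_of_dvd hd0 hqd)
      simp [hF0]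
    · have hdq : Nat.Coprime d q := ((Nat.Prime.coprime_iff_not_dvd hq).mpr hqd).symm
      have hsq1 : (moebius d : ℂ) ^ 2 = 1 := by
        rw [moebius_apply_of_squarefree hsq]
        push_cast
        rw [← pow_mul, mul_comm, pow_mul]
        norm_num
      have hB := lemB q lam hHecke d n hn hdn hsq hdq
      calc ∑ c ∈ (Nat.gcd d (n / d)).divisors,
            lam (n / (d * c)) * lam (d / c) * (moebius (d / c) : ℂ) *
              (moebius d : ℂ) ^ 2 * F d
          = (∑ c ∈ (Nat.gcd d (n / d)).divisors,
              lam (n / (d * c)) * lam (d / c) * (moebius (d / c) : ℂ)) * F d := by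
            rw [Finset.sum_mul]
            exact Finset.sum_congr rfl fun c _ => by rw [hsq1]; ring
        _ = (moebius d : ℂ) * lam n * F d := by rw [hB]
        _ = lam n * ((moebius d : ℂ) * F d) := by ring
  · have h0 : moebius d = 0 := moebius_eq_zero_of_not_squarefree hsq
    simp [h0]
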